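/- For every ε > 0 there is τ > 0 such that for any 1-Lipschitz function f : [a,b] → ℝ there exists a finite family of non-overlapping intervals [c_j, d_j] ⊆ [a,b] such that: (i) f is ε-linear on each [c_j,d_j]; (ii) d_j − c_j ≥ τ(b − a) for all j; (iii) the Lebesgue measure of [a,b] \ ⋃_j [c_j,d_j] is at most ε(b − a). -/

import Mathlib

open Set MeasureTheory

section LinPiecesAux

/-- `f` is `ε`-linear on `[c,d]`. -/
def IsLin (f : ℝ → ℝ) (ε c d : ℝ) : Prop :=
  ∀ x ∈ Set.Icc c d, |f x - (f c + (f d - f c) / (d - c) * (x - c))| ≤ ε * (d - c)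

def lenI (p : ℝ × ℝ) : ℝ := p.2 - p.1

noncomputable def phiI (f : ℝ → ℝ) (p : ℝ × ℝ) : ℝ := (f p.2 - f p.1) ^ 2 / (p.2 - p.1)

open Classical in
noncomputable def badLen (f : ℝ → ℝ) (ε : ℝ) (p : ℝ × ℝ) : ℝ :=
  if IsLin f ε p.1 p.2 then 0 else p.2 - p.1

def nonov (p q : ℝ × ℝ) : Prop := p.2 ≤ q.1 ∨ q.2 ≤ p.1

lemma badLen_nonneg {f : ℝ → ℝ} {ε : ℝ} {p : ℝ × ℝ} (h : p.1 < p.2) :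
    0 ≤ badLen f ε p := by
  unfold badLen; split <;> [exact le_refl _; linarith]

lemma split_lemma (f : ℝ → ℝ) {ε c d : ℝ} (hε : 0 < ε) (hcd : c < d)
    (hbad : ¬ IsLin f ε c d) :
    ∃ x, c < x ∧ x < d ∧
      phiI f (c, d) + ε ^ 2 * (d - c) ≤ phiI f (c, x) + phiI f (x, d) := by
  unfold IsLin at hbad
  push_neg at hbad
  obtain ⟨x, hx, hgt⟩ := hbad
  have h3 : (0:ℝ) < d - c := by linarith
  have hxc : c < x := by
    rcases eq_or_lt_of_le hx.1 with h | h
    · exfalso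
      rw [← h] at hgt
      simp at hgt
      nlinarith [abs_nonneg (f c - (f c + (f d - f c) / (d - c) * (c - c))), hgt]
    · exact h
  have hxd : x < d := by
    rcases eq_or_lt_of_le hx.2 with h | h
    · exfalso
      rw [h] at hgt
      have : f d - (f c + (f d - f c) / (d - c) * (d - c)) = 0 := by
        field_simp
        ring
      rw [this] at hgt
      simp at hgt
      nlinarith
    · exact h
  have h1 : (0:ℝ) < x - c := by linarith
  have h2 : (0:ℝ) < d - x := by linarith
  have e : f x - (f c + (f d - f c) / (d - c) * (x - c))
      = ((f x - f c) * (d - x) - (f d - f x) * (x - c)) / (d - c) := by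
    field_simp
    ring
  rw [e, abs_div, abs_of_pos h3] at hgt
  have hgt2 : ε * (d - c) ^ 2 < |(f x - f c) * (d - x) - (f d - f x) * (x - c)| := by
    rw [lt_div_iff₀ h3] at hgt
    nlinarith
  have key : (ε * (d - c) ^ 2) ^ 2 < ((f x - f c) * (d - x) - (f d - f x) * (x - c)) ^ 2 := by
    have := pow_lt_pow_left₀ hgt2 (by positivity) (n := 2) (by norm_num)
    calc (ε * (d-c)^2)^2 < |(f x - f c) * (d - x) - (f d - f x) * (x - c)| ^ 2 := this
    _ = _ := sq_abs _
  refine ⟨x, hxc, hxd, ?_⟩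
  rw [← sub_nonneg]
  have expand : phiI f (c, x) + phiI f (x, d) - (phiI f (c, d) + ε ^ 2 * (d - c))
      = (((f x - f c) * (d - x) - (f d - f x) * (x - c)) ^ 2
          - ε ^ 2 * ((x - c) * (d - x)) * (d - c) ^ 2) / ((x - c) * (d - x) * (d - c)) := by
    unfold phiI
    simp only
    field_simp
    ring
  rw [expand]
  apply div_nonneg _ (by positivity)
  nlinarith [key, sq_nonneg (d - c), mul_pos h1 h2, sq_nonneg ((x-c) - (d-x)), sq_nonneg ε]

lemma nonov_sub {p t r q : ℝ × ℝ} (h : nonov p t) (hr : p.1 ≤ r.1 ∧ r.2 ≤ p.2)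
    (hq : t.1 ≤ q.1 ∧ q.2 ≤ t.2) : nonov r q := by
  rcases h with h | h
  · exact Or.inl (le_trans (le_trans hr.2 h) hq.1)
  · exact Or.inr (le_trans (le_trans hq.2 h) hr.1)

lemma step_exists (f : ℝ → ℝ) (ε : ℝ) (hε : 0 < ε) :
    ∀ P : List (ℝ × ℝ), (∀ p ∈ P, p.1 < p.2) →
    ∃ Q : List (ℝ × ℝ),
      (∀ q ∈ Q, q.1 < q.2 ∧ ∃ p ∈ P, p.1 ≤ q.1 ∧ q.2 ≤ p.2) ∧
      Q.length ≤ 2 * P.length ∧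
      (Q.map lenI).sum = (P.map lenI).sum ∧
      (P.map (phiI f)).sum + ε ^ 2 * (P.map (badLen f ε)).sum ≤ (Q.map (phiI f)).sum ∧
      (P.Pairwise nonov → Q.Pairwise nonov) := by
  intro P
  induction P with
  | nil => exact fun _ => ⟨[], by simp, by simp, by simp, by simp, by simp⟩
  | cons p tl ih =>
    intro hmem
    obtain ⟨Q', hsub, hlen, hsum, hphi, hpw⟩ :=
      ih (fun q hq => hmem q (List.mem_cons_of_mem _ hq))
    have hp := hmem p (List.mem_cons_self)
    by_cases hgood : IsLin f ε p.1 p.2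
    · refine ⟨p :: Q', ?_, ?_, ?_, ?_, ?_⟩
      · intro q hq
        rcases List.mem_cons.mp hq with rfl | hq
        · exact ⟨hmem _ (List.mem_cons_self), _, List.mem_cons_self, le_refl _, le_refl _⟩
        · obtain ⟨h1, t, ht, h2⟩ := (hsub q hq)
          exact ⟨h1, t, List.mem_cons_of_mem _ ht, h2⟩
      · simp only [List.length_cons]; omega
      · simp only [List.map_cons, List.sum_cons, hsum]
      · have hb : badLen f ε p = 0 := if_pos hgood
        simp only [List.map_cons, List.sum_cons, hb]
        linarith
      · intro hPpw
        rw [List.pairwise_cons] at hPpw ⊢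
        refine ⟨?_, hpw hPpw.2⟩
        intro q hq
        obtain ⟨_, t, ht, h2⟩ := hsub q hq
        exact nonov_sub (hPpw.1 t ht) ⟨le_refl _, le_refl _⟩ h2
    · obtain ⟨x, hx1, hx2, hsplit⟩ := split_lemma f hε hp hgood
      refine ⟨(p.1, x) :: (x, p.2) :: Q', ?_, ?_, ?_, ?_, ?_⟩
      · intro q hq
        rcases List.mem_cons.mp hq with rfl | hq
        · exact ⟨hx1, _, List.mem_cons_self, le_refl _, le_of_lt hx2⟩
        rcases List.mem_cons.mp hq with rfl | hq
        · exact ⟨hx2, _, List.mem_cons_self, le_of_lt hx1, le_refl _⟩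
        · obtain ⟨h1, t, ht, h2⟩ := hsub q hq
          exact ⟨h1, t, List.mem_cons_of_mem _ ht, h2⟩
      · simp only [List.length_cons]; omega
      · simp only [List.map_cons, List.sum_cons, hsum, lenI]
        ring
      · have hb : badLen f ε p = (p.2 - p.1) := if_neg hgood
        simp only [List.map_cons, List.sum_cons, hb]
        have hpe : phiI f p = phiI f (p.1, p.2) := rfl
        rw [hpe]
        nlinarith [hsplit, sq_nonneg ε]
      · intro hPpw
        rw [List.pairwise_cons] at hPpw
        have htail := hpw hPpw.2
        have hq' : ∀ q ∈ Q', ∀ r : ℝ × ℝ, p.1 ≤ r.1 → r.2 ≤ p.2 → nonov r q := by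
          intro q hq r h1 h2
          obtain ⟨_, t, ht, h3⟩ := hsub q hq
          exact nonov_sub (hPpw.1 t ht) ⟨h1, h2⟩ h3
        rw [List.pairwise_cons, List.pairwise_cons]
        refine ⟨?_, ⟨?_, htail⟩⟩
        · intro q hq
          rcases List.mem_cons.mp hq with rfl | hq
          · exact Or.inl (le_refl x)
          · exact hq' q hq _ (le_refl _) (le_of_lt hx2)
        · intro q hq
          exact hq' q hq _ (le_of_lt hx1) (le_refl _)

lemma iterate_exists (f : ℝ → ℝ) (ε δ : ℝ) (hε : 0 < ε) :
    ∀ (N : ℕ) (P : List (ℝ × ℝ)), (∀ p ∈ P, p.1 < p.2) →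
    ∃ Q : List (ℝ × ℝ),
      (∀ q ∈ Q, q.1 < q.2 ∧ ∃ p ∈ P, p.1 ≤ q.1 ∧ q.2 ≤ p.2) ∧
      Q.length ≤ 2 ^ N * P.length ∧
      (Q.map lenI).sum = (P.map lenI).sum ∧
      (P.Pairwise nonov → Q.Pairwise nonov) ∧
      ((Q.map (badLen f ε)).sum ≤ δ ∨
        (P.map (phiI f)).sum + N * (ε ^ 2 * δ) ≤ (Q.map (phiI f)).sum) := by
  intro N
  induction N with
  | zero =>
    intro P hP
    exact ⟨P, fun q hq => ⟨hP q hq, q, hq, le_refl _, le_refl _⟩, by simp, rfl, id,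
      Or.inr (by simp)⟩
  | succ N ih =>
    intro P hP
    by_cases hB : (P.map (badLen f ε)).sum ≤ δ
    · refine ⟨P, fun q hq => ⟨hP q hq, q, hq, le_refl _, le_refl _⟩, ?_, rfl, id, Or.inl hB⟩
      have : 1 ≤ 2 ^ (N + 1) := Nat.one_le_two_pow
      nlinarith [P.length.zero_le]
    · obtain ⟨P', hsub, hlen, hsum, hphi, hpw⟩ := step_exists f ε hε P hP
      obtain ⟨Q, hsub', hlen', hsum', hpw', hdisj⟩ := ih P' (fun p hp => (hsub p hp).1)
      refine ⟨Q, ?_, ?_, by rw [hsum', hsum], fun h => hpw' (hpw h), ?_⟩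
      · intro q hq
        obtain ⟨h1, t, ht, h2⟩ := hsub' q hq
        obtain ⟨_, t', ht', h3⟩ := hsub t ht
        exact ⟨h1, t', ht', le_trans h3.1 h2.1, le_trans h2.2 h3.2⟩
      · calc Q.length ≤ 2 ^ N * P'.length := hlen'
          _ ≤ 2 ^ N * (2 * P.length) := Nat.mul_le_mul_left _ hlen
          _ = 2 ^ (N + 1) * P.length := by ring
      · rcases hdisj with h | h
        · exact Or.inl h
        · right
          push_neg at hB
          have : (P.map (phiI f)).sum + ε ^ 2 * δ ≤ (P'.map (phiI f)).sum := by
            nlinarith [sq_nonneg ε, hphi]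
          push_cast
          nlinarith [h]

lemma sum_filter_split (l : List (ℝ × ℝ)) (p : ℝ × ℝ → Bool) (g : ℝ × ℝ → ℝ) :
    ((l.filter p).map g).sum + ((l.filter fun a => !p a).map g).sum = (l.map g).sum := by
  induction l with
  | nil => simp
  | cons a t ih =>
    by_cases h : p a
    · simp [List.filter_cons, h, ← ih]; ring
    · simp [List.filter_cons, h, ← ih]; ring

lemma sum_map_const (l : List (ℝ × ℝ)) (c : ℝ) :
    (l.map (fun _ => c)).sum = l.length * c := by
  induction l with
  | nil => simp
  | cons a t ih => simp [ih]; ring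

lemma sum_map_add (l : List (ℝ × ℝ)) (g h : ℝ × ℝ → ℝ) :
    (l.map (fun x => g x + h x)).sum = (l.map g).sum + (l.map h).sum := by
  induction l with
  | nil => simp
  | cons a t ih => simp [ih]; ring

lemma sum_map_fin (l : List (ℝ × ℝ)) (g : ℝ × ℝ → ℝ) :
    (l.map g).sum = ∑ i : Fin l.length, g (l.get i) := by
  conv_lhs => rw [← List.ofFn_get l, List.map_ofFn]
  rw [List.sum_ofFn]
  rfl

end LinPiecesAux

/-- For every `ε > 0` there is `τ > 0` such that any 1-Lipschitz
`f : [a,b] → ℝ` admits a finite family of non-overlapping subintervals `[c j, d j] ⊆ [a,b]`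
on each of which `f` is `ε`-linear, all of length at least `τ (b - a)`, covering all of
`[a,b]` except a set of Lebesgue measure at most `ε (b - a)`. -/
theorem linear_pieces_cover (ε : ℝ) (hε : 0 < ε) :
    ∃ τ : ℝ, 0 < τ ∧ ∀ a b : ℝ, a < b → ∀ f : ℝ → ℝ, LipschitzOnWith 1 f (Set.Icc a b) →
      ∃ (n : ℕ) (c d : Fin n → ℝ),
        (∀ j, a ≤ c j ∧ c j < d j ∧ d j ≤ b) ∧
        (∀ j, ∀ x ∈ Set.Icc (c j) (d j),
          |f x - (f (c j) + (f (d j) - f (c j)) / (d j - c j) * (x - c j))|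
            ≤ ε * (d j - c j)) ∧
        (∀ j, τ * (b - a) ≤ d j - c j) ∧
        (∀ i j, i ≠ j → d i ≤ c j ∨ d j ≤ c i) ∧
        volume (Set.Icc a b \ ⋃ j, Set.Icc (c j) (d j)) ≤ ENNReal.ofReal (ε * (b - a)) := by
  classical
  set N : ℕ := ⌈2 / ε ^ 3⌉₊ + 1 with hN
  refine ⟨ε / 2 ^ (N + 1), by positivity, ?_⟩
  intro a b hab f hf
  set τ : ℝ := ε / 2 ^ (N + 1) with hτ
  have hba : (0:ℝ) < b - a := by linarith
  set δ : ℝ := ε / 2 * (b - a) with hδ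
  have hP0 : ∀ p ∈ [((a : ℝ), b)], p.1 < p.2 := by
    intro p hp; simp at hp; subst hp; exact hab
  obtain ⟨Q, hsub, hlen, hsum, hpw, hdisj⟩ := iterate_exists f ε δ hε N [(a, b)] hP0
  have hlenQ : Q.length ≤ 2 ^ N := by simpa using hlen
  have hsumQ : (Q.map lenI).sum = b - a := by
    rw [hsum]; simp [lenI]
  have hbounds : ∀ q ∈ Q, a ≤ q.1 ∧ q.1 < q.2 ∧ q.2 ≤ b := by
    intro q hq
    obtain ⟨h1, t, ht, h2⟩ := hsub q hq
    simp at ht; subst ht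
    exact ⟨h2.1, h1, h2.2⟩
  have hQpw : Q.Pairwise nonov := hpw (by simp)
  -- Lipschitz bound on phi
  have hlip : ∀ x ∈ Set.Icc a b, ∀ y ∈ Set.Icc a b, |f x - f y| ≤ |x - y| := by
    intro x hx y hy
    have := hf.dist_le_mul x hx y hy
    simpa [Real.dist_eq] using this
  have hphile : ∀ q ∈ Q, phiI f q ≤ lenI q := by
    intro q hq
    obtain ⟨ha1, h12, h2b⟩ := hbounds q hq
    have h1 : q.1 ∈ Set.Icc a b := ⟨ha1, by linarith⟩
    have h2 : q.2 ∈ Set.Icc a b := ⟨by linarith, h2b⟩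
    have := hlip q.2 h2 q.1 h1
    rw [abs_of_pos (by linarith : (0:ℝ) < q.2 - q.1)] at this
    have habs := abs_le.mp this
    unfold phiI lenI
    rw [div_le_iff₀ (by linarith)]
    nlinarith [habs.1, habs.2]
  have hQle : (Q.map (phiI f)).sum ≤ b - a := by
    rw [← hsumQ]
    exact List.sum_le_sum hphile
  -- rule out the second disjunct
  have hBQ : (Q.map (badLen f ε)).sum ≤ δ := by
    rcases hdisj with h | h
    · exact h
    · exfalso
      have hphi0 : (0:ℝ) ≤ ([((a:ℝ), b)].map (phiI f)).sum := by
        simp [phiI]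
        positivity
      have hNbig : (1:ℝ) < N * (ε ^ 3 / 2) := by
        have hceil : 2 / ε ^ 3 ≤ (⌈2 / ε ^ 3⌉₊ : ℝ) := Nat.le_ceil _
        have hNR : 2 / ε ^ 3 + 1 ≤ (N : ℝ) := by
          rw [hN]; push_cast; linarith
        have hε3 : (0:ℝ) < ε ^ 3 / 2 := by positivity
        have h2 : (2 / ε ^ 3 + 1) * (ε ^ 3 / 2) ≤ (N : ℝ) * (ε ^ 3 / 2) :=
          mul_le_mul_of_nonneg_right hNR (le_of_lt hε3)
        have h3 : (2 / ε ^ 3) * (ε ^ 3 / 2) = 1 := by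
          field_simp
        nlinarith
      have : (N : ℝ) * (ε ^ 2 * δ) > b - a := by
        rw [hδ]
        calc (N:ℝ) * (ε ^ 2 * (ε / 2 * (b - a))) = (N * (ε ^ 3 / 2)) * (b - a) := by ring
          _ > 1 * (b - a) := by
              exact (mul_lt_mul_of_pos_right hNbig hba)
          _ = b - a := by ring
      linarith [h, hphi0, hQle]
  -- select the good, long intervals
  set sel : ℝ × ℝ → Bool := fun q => decide (IsLin f ε q.1 q.2 ∧ τ * (b - a) ≤ q.2 - q.1)
    with hsel
  set R : List (ℝ × ℝ) := Q.filter sel with hR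
  have hRmem : ∀ r ∈ R, r ∈ Q ∧ IsLin f ε r.1 r.2 ∧ τ * (b - a) ≤ r.2 - r.1 := by
    intro r hr
    rw [hR, List.mem_filter] at hr
    exact ⟨hr.1, by simpa [hsel] using hr.2⟩
  -- sum bound for the unselected part
  have hτpos : 0 < τ * (b - a) := by positivity
  have hRc : ((Q.filter fun q => !sel q).map lenI).sum ≤ δ + (2:ℝ) ^ N * (τ * (b - a)) := by
    have hpt : ∀ q ∈ (Q.filter fun q => !sel q),
        lenI q ≤ badLen f ε q + τ * (b - a) := by
      intro q hq
      rw [List.mem_filter] at hq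
      have hqQ := hq.1
      have hns := hq.2
      simp only [hsel, Bool.not_eq_true', decide_eq_false_iff_not, not_and, not_le] at hns
      by_cases hL : IsLin f ε q.1 q.2
      · have hsmall : q.2 - q.1 < τ * (b - a) := hns hL
        have : badLen f ε q = 0 := if_pos hL
        rw [this]
        unfold lenI
        linarith
      · have : badLen f ε q = q.2 - q.1 := if_neg hL
        rw [this]
        unfold lenI
        linarith
    calc ((Q.filter fun q => !sel q).map lenI).sum
        ≤ ((Q.filter fun q => !sel q).map (fun q => badLen f ε q + τ * (b - a))).sum :=
          List.sum_le_sum hpt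
      _ = ((Q.filter fun q => !sel q).map (badLen f ε)).sum
            + (Q.filter fun q => !sel q).length * (τ * (b - a)) := by
          rw [sum_map_add]
          congr 1
          exact sum_map_const _ _
      _ ≤ δ + (2:ℝ) ^ N * (τ * (b - a)) := by
          have hsplit := sum_filter_split Q sel (badLen f ε)
          have hRnn : 0 ≤ ((Q.filter sel).map (badLen f ε)).sum := by
            apply List.sum_nonneg
            intro x hx
            simp only [List.mem_map] at hx
            obtain ⟨q, hq, rfl⟩ := hx
            exact badLen_nonneg (hbounds q (List.mem_of_mem_filter hq)).2.1
          have h1 : ((Q.filter fun q => !sel q).map (badLen f ε)).sum ≤ δ := by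
            linarith [hBQ, hsplit, hRnn]
          have h2 : ((Q.filter fun q => !sel q).length : ℝ) ≤ (2:ℝ) ^ N := by
            have := le_trans (List.length_filter_le (fun q => !sel q) Q) hlenQ
            exact_mod_cast this
          nlinarith [hτpos]
  have hkey : (b - a) - (R.map lenI).sum ≤ ε * (b - a) := by
    have hsplit : (R.map lenI).sum + ((Q.filter fun q => !sel q).map lenI).sum
        = (Q.map lenI).sum := by
      rw [hR]; exact sum_filter_split Q sel lenI
    have h2 : (2:ℝ) ^ N * (τ * (b - a)) = ε / 2 * (b - a) := by
      rw [hτ, pow_succ]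
      field_simp
      ring
    have h3 : ε / 2 * (b - a) + ε / 2 * (b - a) = ε * (b - a) := by ring
    have h4 : δ = ε / 2 * (b - a) := hδ
    linarith [hRc, hsplit, hsumQ]
  -- nonoverlap of selected intervals
  have hRpw : R.Pairwise nonov := List.Pairwise.sublist (by rw [hR]; exact List.filter_sublist) hQpw
  have hget := List.pairwise_iff_get.mp hRpw
  have hnov : ∀ i j : Fin R.length, i ≠ j →
      (R.get i).2 ≤ (R.get j).1 ∨ (R.get j).2 ≤ (R.get i).1 := by
    intro i j hij
    rcases lt_or_gt_of_ne hij with h | h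
    · exact hget i j h
    · rcases hget j i h with h' | h'
      · exact Or.inr h'
      · exact Or.inl h'
  have hmemQ : ∀ j : Fin R.length, R.get j ∈ Q := fun j =>
    List.mem_of_mem_filter (by rw [← hR]; exact R.get_mem j)
  -- build the data
  refine ⟨R.length, fun j => (R.get j).1, fun j => (R.get j).2, ?_, ?_, ?_, ?_, ?_⟩
  · intro j
    exact hbounds _ (hmemQ j)
  · intro j
    exact (hRmem _ (R.get_mem j)).2.1
  · intro j
    exact (hRmem _ (R.get_mem j)).2.2
  · exact hnov
  · -- the measure estimate
    have hTsub : (⋃ j, Set.Icc (R.get j).1 (R.get j).2) ⊆ Set.Icc a b := by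
      apply Set.iUnion_subset
      intro j
      have h := hbounds _ (hmemQ j)
      exact Set.Icc_subset_Icc h.1 h.2.2
    have hTmeas : MeasurableSet (⋃ j, Set.Icc (R.get j).1 (R.get j).2) :=
      MeasurableSet.iUnion fun j => measurableSet_Icc
    have hfin : volume (⋃ j, Set.Icc (R.get j).1 (R.get j).2) ≠ ⊤ := by
      apply ne_top_of_le_ne_top _ (measure_mono hTsub)
      simp [Real.volume_Icc]
    rw [measure_diff hTsub hTmeas.nullMeasurableSet hfin, tsub_le_iff_right]
    have hdisjIoc : Pairwise (Function.onFun Disjoint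
        fun j : Fin R.length => Set.Ioc (R.get j).1 (R.get j).2) := by
      intro i j hij
      simp only [Function.onFun]
      rcases hnov i j hij with h | h
      · apply Set.disjoint_left.mpr
        rintro x hx hx'
        rw [Set.mem_Ioc] at hx hx'
        linarith [hx.2, hx'.1]
      · apply Set.disjoint_left.mpr
        rintro x hx hx'
        rw [Set.mem_Ioc] at hx hx'
        linarith [hx.1, hx'.2]
    have hIoc : volume (⋃ j, Set.Ioc (R.get j).1 (R.get j).2)
        = ∑ j : Fin R.length, ENNReal.ofReal ((R.get j).2 - (R.get j).1) := by
      rw [measure_iUnion hdisjIoc fun j => measurableSet_Ioc]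
      simp [Real.volume_Ioc, tsum_fintype]
    have hlen_nonneg : ∀ j : Fin R.length, (0:ℝ) ≤ lenI (R.get j) := by
      intro j
      have := (hbounds _ (hmemQ j)).2.1
      unfold lenI
      linarith
    have hofsum : ENNReal.ofReal ((R.map lenI).sum)
        = ∑ j : Fin R.length, ENNReal.ofReal ((R.get j).2 - (R.get j).1) := by
      rw [sum_map_fin R lenI, ENNReal.ofReal_sum_of_nonneg (fun j _ => hlen_nonneg j)]
      rfl
    have hsum_nonneg : (0:ℝ) ≤ (R.map lenI).sum := by
      apply List.sum_nonneg
      intro x hx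
      simp only [List.mem_map] at hx
      obtain ⟨q, hq, rfl⟩ := hx
      have := (hbounds q (List.mem_of_mem_filter (by rw [← hR]; exact hq))).2.1
      unfold lenI
      linarith
    calc volume (Set.Icc a b) = ENNReal.ofReal (b - a) := Real.volume_Icc
      _ ≤ ENNReal.ofReal (ε * (b - a) + (R.map lenI).sum) := by
          apply ENNReal.ofReal_le_ofReal
          linarith [hkey]
      _ = ENNReal.ofReal (ε * (b - a)) + ENNReal.ofReal ((R.map lenI).sum) := by
          rw [ENNReal.ofReal_add (by positivity) hsum_nonneg]
      _ ≤ ENNReal.ofReal (ε * (b - a)) + volume (⋃ j, Set.Icc (R.get j).1 (R.get j).2) := by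
          apply add_le_add le_rfl
          rw [hofsum, ← hIoc]
          exact measure_mono (Set.iUnion_mono fun j => Set.Ioc_subset_Icc_self)
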